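/- The function b_k(t) = β·r(t)/(1 - r(t)), where β = 2k - 1 and r(t) = (n/(n+β))(1 - t/N)^{β/2}, satisfies the differential equation b_k'(t) = -(k·b_k(t))/(N - t) - b_k(t)(b_k(t) - 1)/(2(N - t)) with b_k(0) = n. -/

import Mathlib

/-- b_k(t) = β r(t)/(1 - r(t)) with β = 2k-1 and
r(t) = (n/(n+β))(1-t/N)^{β/2} satisfies b_k(0) = n and
b_k'(t) = -k b_k(t)/(N-t) - b_k(t)(b_k(t)-1)/(2(N-t)) on (0, N). -/
theorem stmt_14 (n k : ℕ) (hn : 1 ≤ n) (hk : 1 ≤ k) (N : ℝ) (hN : 0 < N)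
    (β : ℝ) (hβ : β = 2 * (k : ℝ) - 1)
    (r b : ℝ → ℝ)
    (hr : ∀ t : ℝ, r t = ((n : ℝ) / ((n : ℝ) + β)) * (1 - t / N) ^ (β / 2))
    (hb : ∀ t : ℝ, b t = β * r t / (1 - r t)) :
    b 0 = n ∧ ∀ t ∈ Set.Ioo (0 : ℝ) N,
      HasDerivAt b (-((k : ℝ) * b t) / (N - t) - b t * (b t - 1) / (2 * (N - t))) t := by
  have hβ1 : (1 : ℝ) ≤ β := by
    have : (1 : ℝ) ≤ (k : ℝ) := by exact_mod_cast hk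
    linarith [hβ]
  have hβpos : 0 < β := by linarith
  have hnpos : (0 : ℝ) < n := by exact_mod_cast hn
  have hnβ : (0 : ℝ) < (n : ℝ) + β := by linarith
  have hc1 : (n : ℝ) / ((n : ℝ) + β) < 1 := by
    rw [div_lt_one hnβ]; linarith
  have hc0 : 0 < (n : ℝ) / ((n : ℝ) + β) := by positivity
  constructor
  · rw [hb, hr]
    simp only [zero_div, sub_zero, Real.one_rpow, mul_one]
    have hne0 : 1 - (n : ℝ) / ((n : ℝ) + β) ≠ 0 := by
      have : (n : ℝ) / ((n : ℝ) + β) < 1 := hc1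
      intro h; rw [sub_eq_zero] at h; linarith
    field_simp
    have hsub : (n : ℝ) + β - n = β := by ring
    rw [hsub, div_self (ne_of_gt hβpos)]
  · intro t ht
    obtain ⟨ht0, htN⟩ := ht
    have hx0 : 0 < 1 - t / N := by
      rw [sub_pos, div_lt_one hN]; exact htN
    have hx1 : 1 - t / N ≤ 1 := by
      have : 0 < t / N := div_pos ht0 hN
      linarith
    have hxe : 1 - t / N = (N - t) / N := by field_simp
    have hNt : 0 < N - t := by linarith
    -- r t bounds
    have hrt : r t = ((n : ℝ) / ((n : ℝ) + β)) * (1 - t / N) ^ (β / 2) := hr t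
    have hp0 : 0 < (1 - t / N) ^ (β / 2) := Real.rpow_pos_of_pos hx0 _
    have hp1 : (1 - t / N) ^ (β / 2) ≤ 1 :=
      Real.rpow_le_one (le_of_lt hx0) hx1 (by positivity)
    have hrt1 : r t < 1 := by
      rw [hrt]
      calc ((n : ℝ) / ((n : ℝ) + β)) * (1 - t / N) ^ (β / 2)
          ≤ ((n : ℝ) / ((n : ℝ) + β)) * 1 := by
            exact mul_le_mul_of_nonneg_left hp1 (le_of_lt hc0)
        _ < 1 := by linarith
    have hne : 1 - r t ≠ 0 := by linarith
    -- derivative of r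
    have h1 : HasDerivAt (fun s : ℝ => 1 - s / N) (-(1 / N)) t := by
      simpa using ((hasDerivAt_id t).div_const N).const_sub 1
    have h2 : HasDerivAt (fun s : ℝ => (1 - s / N) ^ (β / 2))
        (-(1 / N) * (β / 2) * (1 - t / N) ^ (β / 2 - 1)) t :=
      h1.rpow_const (Or.inl (ne_of_gt hx0))
    have h3 : HasDerivAt (fun s : ℝ => ((n : ℝ) / ((n : ℝ) + β)) * (1 - s / N) ^ (β / 2))
        (((n : ℝ) / ((n : ℝ) + β)) * (-(1 / N) * (β / 2) * (1 - t / N) ^ (β / 2 - 1))) t :=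
      h2.const_mul _
    have hrfun : r = fun s : ℝ => ((n : ℝ) / ((n : ℝ) + β)) * (1 - s / N) ^ (β / 2) :=
      funext hr
    have hr' : HasDerivAt r (-(β / (2 * (N - t))) * r t) t := by
      rw [hrfun]
      convert h3 using 1
      show -(β / (2 * (N - t))) * (((n : ℝ) / ((n : ℝ) + β)) * (1 - t / N) ^ (β / 2)) =
        ((n : ℝ) / ((n : ℝ) + β)) * (-(1 / N) * (β / 2) * (1 - t / N) ^ (β / 2 - 1))
      have hsplit : (1 - t / N) ^ (β / 2) = (1 - t / N) ^ (β / 2 - 1) * (1 - t / N) := by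
        rw [← Real.rpow_add_one (ne_of_gt hx0)]; ring_nf
      rw [hsplit, hxe]
      field_simp
    -- derivative of b
    have hbfun : b = fun s : ℝ => β * r s / (1 - r s) := funext hb
    have hd : HasDerivAt b
        ((β * (-(β / (2 * (N - t))) * r t) * (1 - r t) -
          β * r t * (0 - -(β / (2 * (N - t))) * r t)) / (1 - r t) ^ 2) t := by
      rw [hbfun]
      exact (hr'.const_mul β).div ((hasDerivAt_const t (1:ℝ)).sub hr') hne
    convert hd using 1
    rw [hb t, hβ]
    have hβk : β = 2 * (k : ℝ) - 1 := hβ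
    field_simp
    ring
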